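/- Commit-phase lower bound composition: let T_s ∈ [0, T], δ ≥ e^{-β T_s} for a constant β > 0, and Δ̃_min > 0. Then the total regret R(T) ≥ ((K-1)/K) T_s Δ̃_min + e^{-β T_s} (T - T_s - 1) Δ̃_min is Ω(log T): there is a constant c > 0 (depending on K, β, Δ̃_min but not T) such that for all sufficiently large T, the right-hand side (minimized over T_s ∈ [0, T]) is at least c log T. -/

import Mathlib

theorem stmt18_commit_lower_bound (K : ℕ) (hK : 2 ≤ K) (β Δmin : ℝ)
    (hβ : 0 < β) (hΔmin : 0 < Δmin) :
    ∃ c > 0, ∃ T₀ : ℝ, ∀ T ≥ T₀, ∀ Ts : ℝ, 0 ≤ Ts → Ts ≤ T →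
      ((K - 1 : ℝ) / K) * Ts * Δmin + Real.exp (-β * Ts) * (T - Ts - 1) * Δmin ≥
        c * Real.log T := by
  have hKpos : (0:ℝ) < K := by positivity
  have hK2 : (2:ℝ) ≤ K := by exact_mod_cast hK
  have hK' : (1:ℝ)/2 ≤ (K - 1 : ℝ)/K := by
    rw [div_le_div_iff₀ (by norm_num) hKpos]
    linarith
  refine ⟨Δmin/(8*β), by positivity, ?_⟩
  -- eventual conditions on T
  have h1 : ∀ᶠ T : ℝ in Filter.atTop, 8*β ≤ Real.log T :=
    Real.tendsto_log_atTop.eventually_ge_atTop _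
  have h2 : ∀ᶠ T : ℝ in Filter.atTop, Real.log T ≤ (β/2) * T := by
    have h := (Real.isLittleO_log_id_atTop).def (by positivity : (0:ℝ) < β/2)
    filter_upwards [h, Filter.eventually_ge_atTop (1:ℝ)] with T hT hT1
    have h0 : (0:ℝ) ≤ T := by linarith
    have hlog : 0 ≤ Real.log T := Real.log_nonneg hT1
    simpa [Real.norm_eq_abs, abs_of_nonneg, h0, hlog, id] using hT
  have h3 : ∀ᶠ T : ℝ in Filter.atTop, Real.log T ≤ 4*β * Real.sqrt T := by
    have h := (isLittleO_log_rpow_atTop (by norm_num : (0:ℝ) < 1/2)).def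
      (by positivity : (0:ℝ) < 4*β)
    filter_upwards [h, Filter.eventually_ge_atTop (1:ℝ)] with T hT hT1
    have h0 : (0:ℝ) ≤ T := by linarith
    have hlog : 0 ≤ Real.log T := Real.log_nonneg hT1
    have hr' : T ^ ((1:ℝ)/2) = Real.sqrt T := by
      rw [Real.sqrt_eq_rpow]
    have habs : |T ^ ((1:ℝ)/2)| = Real.sqrt T := by
      rw [hr']; exact abs_of_nonneg (Real.sqrt_nonneg T)
    calc Real.log T = ‖Real.log T‖ := by rw [Real.norm_eq_abs, abs_of_nonneg hlog]
      _ ≤ 4*β * ‖T ^ ((1:ℝ)/2)‖ := hT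
      _ = 4*β * Real.sqrt T := by rw [Real.norm_eq_abs, habs]
  have h4 : ∀ᶠ T : ℝ in Filter.atTop, (4:ℝ) ≤ T := Filter.eventually_ge_atTop 4
  obtain ⟨T₀, hT₀⟩ := Filter.eventually_atTop.mp (((h1.and h2).and h3).and h4)
  refine ⟨T₀, ?_⟩
  intro T hT Ts hTs0 hTsT
  obtain ⟨⟨⟨hl1, hl2⟩, hl3⟩, hl4⟩ := hT₀ T hT
  have hTpos : (0:ℝ) < T := by linarith
  have hlogpos : 0 < Real.log T := by nlinarith
  set L := Real.log T with hL
  by_cases hcase : L / (2*β) ≤ Ts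
  · -- exploration is long: first term dominates
    have hfirst : Δmin * L / (4*β) ≤ ((K - 1 : ℝ)/K) * Ts * Δmin := by
      have h1' : L/(2*β) ≤ Ts := hcase
      have : (1/2) * (L/(2*β)) * Δmin ≤ ((K - 1 : ℝ)/K) * Ts * Δmin := by
        apply mul_le_mul_of_nonneg_right _ hΔmin.le
        apply mul_le_mul hK' h1' (by positivity) (by linarith [hK'])
      calc Δmin * L / (4*β) = (1/2) * (L/(2*β)) * Δmin := by ring
        _ ≤ _ := this
    have hexp1 : Real.exp (-β * Ts) ≤ 1 := by
      rw [Real.exp_le_one_iff]; nlinarith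
    have hexp0 : 0 < Real.exp (-β * Ts) := Real.exp_pos _
    have hsecond : -Δmin ≤ Real.exp (-β * Ts) * (T - Ts - 1) * Δmin := by
      rcases le_or_gt 0 (T - Ts - 1) with h | h
      · nlinarith [mul_nonneg (mul_nonneg hexp0.le h) hΔmin.le]
      · have ht : -1 ≤ T - Ts - 1 := by linarith
        have h2 : (1:ℝ) * (T - Ts - 1) ≤ Real.exp (-β * Ts) * (T - Ts - 1) :=
          mul_le_mul_of_nonpos_right hexp1 h.le
        nlinarith [mul_le_mul_of_nonneg_right h2 hΔmin.le]
    have hbig : Δmin ≤ Δmin * L / (8*β) := by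
      rw [le_div_iff₀ (by positivity)]
      nlinarith
    calc Δmin/(8*β) * L = Δmin * L / (4*β) - Δmin * L / (8*β) := by ring
      _ ≤ Δmin * L / (4*β) - Δmin := by linarith
      _ ≤ ((K - 1 : ℝ)/K) * Ts * Δmin + Real.exp (-β * Ts) * (T - Ts - 1) * Δmin := by
          linarith
  · -- exploration is short: exp term dominates
    push_neg at hcase
    have hsqrt : Real.sqrt T = Real.exp (L / 2) := by
      rw [Real.sqrt_eq_rpow, Real.rpow_def_of_pos hTpos]
      ring_nf
      rfl
    have hsqpos : 0 < Real.sqrt T := Real.sqrt_pos.mpr hTpos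
    have hexp : Real.exp (-(L/2)) ≤ Real.exp (-β * Ts) := by
      apply Real.exp_le_exp.mpr
      have : β * Ts ≤ L / 2 := by
        have := hcase.le
        calc β * Ts ≤ β * (L/(2*β)) := by nlinarith
          _ = L/2 := by field_simp
      linarith
    have hexpval : Real.exp (-(L/2)) = 1 / Real.sqrt T := by
      rw [hsqrt, Real.exp_neg, one_div]
    have hTsL : Ts ≤ L/(2*β) := hcase.le
    have hgap : T/2 ≤ T - Ts - 1 := by
      have hL4 : L/(2*β) ≤ T/4 := by
        rw [div_le_div_iff₀ (by positivity) (by norm_num)]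
        linarith
      linarith
    have hgap0 : (0:ℝ) ≤ T/2 := by linarith
    have hsecond : Real.exp (-(L/2)) * (T/2) * Δmin ≤
        Real.exp (-β * Ts) * (T - Ts - 1) * Δmin := by
      apply mul_le_mul_of_nonneg_right _ hΔmin.le
      apply mul_le_mul hexp hgap hgap0 (Real.exp_pos _).le
    have hss : Real.sqrt T * Real.sqrt T = T := Real.mul_self_sqrt hTpos.le
    have hvalue : Real.exp (-(L/2)) * (T/2) * Δmin = Real.sqrt T / 2 * Δmin := by
      rw [hexpval, ← hss]
      field_simp
      rw [Real.sqrt_sq (Real.sqrt_nonneg T)]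
    have hfinal : Δmin/(8*β) * L ≤ Real.sqrt T / 2 * Δmin := by
      rw [div_mul_eq_mul_div, div_le_iff₀ (by positivity)]
      linarith [mul_le_mul_of_nonneg_left hl3 hΔmin.le]
    have hfirst0 : 0 ≤ ((K - 1 : ℝ)/K) * Ts * Δmin := by
      apply mul_nonneg (mul_nonneg (by linarith [hK']) hTs0) hΔmin.le
    calc Δmin/(8*β) * L ≤ Real.sqrt T / 2 * Δmin := hfinal
      _ = Real.exp (-(L/2)) * (T/2) * Δmin := hvalue.symm
      _ ≤ Real.exp (-β * Ts) * (T - Ts - 1) * Δmin := hsecond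
      _ ≤ _ := by linarith
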